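/- (Euclidean analogue of the quantitative bound in Theorem 1.) Let f : ℝ^d → ℝ be μ-strongly convex (μ > 0), let g : ℝ^d → ℝ be convex and Lipschitz with constant L, and let α > 0, λ > 0. Suppose x* minimizes f + α·g over ℝ^d and x^λ minimizes f + α·g^λ over ℝ^d, where g^λ is the Moreau–Yoshida envelope of g. Then ‖x^λ − x*‖² ≤ α·λ·L²/(2μ). In particular x^λ → x* as λ → 0⁺. -/

import Mathlib

/-- The Moreau–Yoshida envelope of `g` with scaling parameter `lam`:
`g^lam(x) = inf_y ( g(y) + ‖x − y‖² / (2 lam) )`. -/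
noncomputable def moreauEnv {d : ℕ} (g : EuclideanSpace ℝ (Fin d) → ℝ) (lam : ℝ)
    (x : EuclideanSpace ℝ (Fin d)) : ℝ :=
  ⨅ y : EuclideanSpace ℝ (Fin d), (g y + ‖x - y‖ ^ 2 / (2 * lam))

section Aux

variable {d : ℕ}

lemma moreau_summand_lb {g : EuclideanSpace ℝ (Fin d) → ℝ} {L lam : ℝ}
    (hgL : ∀ x y : EuclideanSpace ℝ (Fin d), |g x - g y| ≤ L * ‖x - y‖)
    (hlam : 0 < lam) (x y : EuclideanSpace ℝ (Fin d)) :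
    g x - lam * L ^ 2 / 2 ≤ g y + ‖x - y‖ ^ 2 / (2 * lam) := by
  have h := (abs_le.mp (hgL x y)).2
  have hsq : 0 ≤ (lam * L - ‖x - y‖) ^ 2 := sq_nonneg _
  have hl : (0:ℝ) < 2 * lam := by linarith
  have : 0 ≤ (lam * L - ‖x - y‖) ^ 2 / (2 * lam) := by positivity
  have hexp : (lam * L - ‖x - y‖) ^ 2 / (2 * lam)
      = lam * L ^ 2 / 2 - L * ‖x - y‖ + ‖x - y‖ ^ 2 / (2 * lam) := by
    field_simp; ring
  nlinarith [this, hexp]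

lemma moreau_bddBelow {g : EuclideanSpace ℝ (Fin d) → ℝ} {L lam : ℝ}
    (hgL : ∀ x y : EuclideanSpace ℝ (Fin d), |g x - g y| ≤ L * ‖x - y‖)
    (hlam : 0 < lam) (x : EuclideanSpace ℝ (Fin d)) :
    BddBelow (Set.range fun y => g y + ‖x - y‖ ^ 2 / (2 * lam)) := by
  refine ⟨g x - lam * L ^ 2 / 2, ?_⟩
  rintro _ ⟨y, rfl⟩
  exact moreau_summand_lb hgL hlam x y

lemma moreau_le {g : EuclideanSpace ℝ (Fin d) → ℝ} {L lam : ℝ}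
    (hgL : ∀ x y : EuclideanSpace ℝ (Fin d), |g x - g y| ≤ L * ‖x - y‖)
    (hlam : 0 < lam) (x : EuclideanSpace ℝ (Fin d)) :
    moreauEnv g lam x ≤ g x := by
  have := ciInf_le (moreau_bddBelow hgL hlam x) x
  simpa [moreauEnv] using this

lemma moreau_ge {g : EuclideanSpace ℝ (Fin d) → ℝ} {L lam : ℝ}
    (hgL : ∀ x y : EuclideanSpace ℝ (Fin d), |g x - g y| ≤ L * ‖x - y‖)
    (hlam : 0 < lam) (x : EuclideanSpace ℝ (Fin d)) :
    g x - lam * L ^ 2 / 2 ≤ moreauEnv g lam x :=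
  le_ciInf (moreau_summand_lb hgL hlam x)

lemma real_le_of_forall_pos_le_add {a b : ℝ} (h : ∀ ε : ℝ, 0 < ε → a ≤ b + ε) :
    a ≤ b := by
  by_contra hc
  push_neg at hc
  have := h ((a - b) / 2) (by linarith)
  linarith

lemma moreau_convex_ineq {g : EuclideanSpace ℝ (Fin d) → ℝ} {L lam : ℝ}
    (hg : ConvexOn ℝ Set.univ g)
    (hgL : ∀ x y : EuclideanSpace ℝ (Fin d), |g x - g y| ≤ L * ‖x - y‖)
    (hlam : 0 < lam) (x x' : EuclideanSpace ℝ (Fin d)) {t : ℝ}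
    (ht0 : 0 ≤ t) (ht1 : t ≤ 1) :
    moreauEnv g lam (t • x + (1 - t) • x') ≤
      t * moreauEnv g lam x + (1 - t) * moreauEnv g lam x' := by
  rcases eq_or_lt_of_le ht0 with h0 | h0
  · simp [← h0]
  rcases eq_or_lt_of_le ht1 with h1 | h1
  · simp [h1]
  have h1' : 0 < 1 - t := by linarith
  apply real_le_of_forall_pos_le_add
  intro ε hε
  -- pick near minimizers
  have hx : moreauEnv g lam x < moreauEnv g lam x + ε / (2 * t) :=
    lt_add_of_pos_right _ (by positivity)
  have hx' : moreauEnv g lam x' < moreauEnv g lam x' + ε / (2 * (1 - t)) :=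
    lt_add_of_pos_right _ (by positivity)
  obtain ⟨y, hy⟩ := exists_lt_of_ciInf_lt hx
  obtain ⟨y', hy'⟩ := exists_lt_of_ciInf_lt hx'
  have hstep : moreauEnv g lam (t • x + (1 - t) • x') ≤
      g (t • y + (1 - t) • y') +
        ‖(t • x + (1 - t) • x') - (t • y + (1 - t) • y')‖ ^ 2 / (2 * lam) :=
    ciInf_le (moreau_bddBelow hgL hlam _) _
  have hzw : (t • x + (1 - t) • x') - (t • y + (1 - t) • y')
      = t • (x - y) + (1 - t) • (x' - y') := by
    module
  have hnorm : ‖(t • x + (1 - t) • x') - (t • y + (1 - t) • y')‖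
      ≤ t * ‖x - y‖ + (1 - t) * ‖x' - y'‖ := by
    rw [hzw]
    calc ‖t • (x - y) + (1 - t) • (x' - y')‖
        ≤ ‖t • (x - y)‖ + ‖(1 - t) • (x' - y')‖ := norm_add_le _ _
      _ = t * ‖x - y‖ + (1 - t) * ‖x' - y'‖ := by
          rw [norm_smul, norm_smul, Real.norm_eq_abs, Real.norm_eq_abs,
            abs_of_pos h0, abs_of_pos h1']
  have hnormsq : ‖(t • x + (1 - t) • x') - (t • y + (1 - t) • y')‖ ^ 2
      ≤ t * ‖x - y‖ ^ 2 + (1 - t) * ‖x' - y'‖ ^ 2 := by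
    have hn0 : (0:ℝ) ≤ ‖(t • x + (1 - t) • x') - (t • y + (1 - t) • y')‖ :=
      norm_nonneg _
    nlinarith [sq_nonneg (‖x - y‖ - ‖x' - y'‖), mul_nonneg h0.le h1'.le,
      norm_nonneg (x - y), norm_nonneg (x' - y')]
  have hgconv : g (t • y + (1 - t) • y') ≤ t * g y + (1 - t) * g y' :=
    hg.2 (Set.mem_univ y) (Set.mem_univ y') h0.le h1'.le (by ring)
  have hdiv : ‖(t • x + (1 - t) • x') - (t • y + (1 - t) • y')‖ ^ 2 / (2 * lam)
      ≤ (t * ‖x - y‖ ^ 2 + (1 - t) * ‖x' - y'‖ ^ 2) / (2 * lam) := by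
    gcongr
  have key : moreauEnv g lam (t • x + (1 - t) • x') ≤
      t * (g y + ‖x - y‖ ^ 2 / (2 * lam)) +
        (1 - t) * (g y' + ‖x' - y'‖ ^ 2 / (2 * lam)) := by
    have : (t * ‖x - y‖ ^ 2 + (1 - t) * ‖x' - y'‖ ^ 2) / (2 * lam)
        = t * (‖x - y‖ ^ 2 / (2 * lam)) + (1 - t) * (‖x' - y'‖ ^ 2 / (2 * lam)) := by
      field_simp
    nlinarith [hstep, hdiv, hgconv]
  have h5 : t * (g y + ‖x - y‖ ^ 2 / (2 * lam))
      ≤ t * (moreauEnv g lam x + ε / (2 * t)) :=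
    mul_le_mul_of_nonneg_left hy.le h0.le
  have h6 : (1 - t) * (g y' + ‖x' - y'‖ ^ 2 / (2 * lam))
      ≤ (1 - t) * (moreauEnv g lam x' + ε / (2 * (1 - t))) :=
    mul_le_mul_of_nonneg_left hy'.le h1'.le
  have h7 : t * (moreauEnv g lam x + ε / (2 * t)) +
      (1 - t) * (moreauEnv g lam x' + ε / (2 * (1 - t)))
      = t * moreauEnv g lam x + (1 - t) * moreauEnv g lam x' + ε := by
    field_simp; ring
  linarith

/-- A minimizer of a `μ`-strongly convex function has a quadratic growth bound. -/
lemma strong_min_quad {F : EuclideanSpace ℝ (Fin d) → ℝ} {μ : ℝ} (hμ : 0 < μ)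
    (hsc : ∀ y z : EuclideanSpace ℝ (Fin d), ∀ t : ℝ, 0 ≤ t → t ≤ 1 →
      F (t • y + (1 - t) • z) ≤
        t * F y + (1 - t) * F z - μ / 2 * (t * (1 - t) * ‖y - z‖ ^ 2))
    {x0 : EuclideanSpace ℝ (Fin d)} (hmin : ∀ y, F x0 ≤ F y)
    (y : EuclideanSpace ℝ (Fin d)) :
    F x0 + μ / 2 * ‖y - x0‖ ^ 2 ≤ F y := by
  set c := ‖y - x0‖ ^ 2 with hc
  have hc0 : 0 ≤ c := by positivity
  have key : ∀ t : ℝ, 0 < t → t ≤ 1 → μ / 2 * ((1 - t) * c) ≤ F y - F x0 := by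
    intro t ht ht1
    have h1 := hsc y x0 t ht.le ht1
    have h2 := hmin (t • y + (1 - t) • x0)
    rw [← hc] at h1
    have h3 : t * (μ / 2 * ((1 - t) * c)) ≤ t * (F y - F x0) := by nlinarith
    exact le_of_mul_le_mul_left h3 ht
  rcases eq_or_lt_of_le hc0 with h0 | h0
  · have := hmin y
    nlinarith
  · have : μ / 2 * c ≤ F y - F x0 := by
      apply real_le_of_forall_pos_le_add
      intro ε hε
      set t : ℝ := min 1 (2 * ε / (μ * c)) with htdef
      have ht0 : 0 < t := lt_min one_pos (by positivity)
      have ht1 : t ≤ 1 := min_le_left _ _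
      have ht2 : t ≤ 2 * ε / (μ * c) := min_le_right _ _
      have hk := key t ht0 ht1
      have htc : μ / 2 * (t * c) ≤ ε := by
        have : μ / 2 * (t * c) ≤ μ / 2 * ((2 * ε / (μ * c)) * c) := by
          have := mul_le_mul_of_nonneg_right ht2 hc0
          nlinarith
        have heq : μ / 2 * ((2 * ε / (μ * c)) * c) = ε := by
          field_simp
        linarith
      nlinarith [hk, htc]
    linarith

end Aux

/-- Euclidean analogue of the quantitative bound in Theorem 1: if `f` is `μ`-strongly
convex (`μ > 0`), `g` is convex and `L`-Lipschitz, `α > 0`, `x*` minimizes `f + α g`,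
and for each `lam > 0` the point `x^lam` minimizes `f + α g^lam`, then
`‖x^lam − x*‖² ≤ α lam L² / (2 μ)` for every `lam > 0`; in particular `x^lam → x*` as
`lam → 0⁺`. -/
theorem moreau_approx_minimizer_quantitative {d : ℕ}
    (f g : EuclideanSpace ℝ (Fin d) → ℝ) (μ α L : ℝ)
    (hμ : 0 < μ) (hα : 0 < α)
    (hf : ∀ y z : EuclideanSpace ℝ (Fin d), ∀ t : ℝ, 0 ≤ t → t ≤ 1 →
      f (t • y + (1 - t) • z) ≤
        t * f y + (1 - t) * f z - μ / 2 * (t * (1 - t) * ‖y - z‖ ^ 2))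
    (hg : ConvexOn ℝ Set.univ g)
    (hgL : ∀ x y : EuclideanSpace ℝ (Fin d), |g x - g y| ≤ L * ‖x - y‖)
    (xstar : EuclideanSpace ℝ (Fin d))
    (hxstar : ∀ y : EuclideanSpace ℝ (Fin d), f xstar + α * g xstar ≤ f y + α * g y)
    (xlam : ℝ → EuclideanSpace ℝ (Fin d))
    (hxlam : ∀ lam : ℝ, 0 < lam → ∀ y : EuclideanSpace ℝ (Fin d),
      f (xlam lam) + α * moreauEnv g lam (xlam lam) ≤ f y + α * moreauEnv g lam y) :
    (∀ lam : ℝ, 0 < lam → ‖xlam lam - xstar‖ ^ 2 ≤ α * lam * L ^ 2 / (2 * μ)) ∧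
      Filter.Tendsto xlam (nhdsWithin 0 (Set.Ioi 0)) (nhds xstar) := by
  have hbound : ∀ lam : ℝ, 0 < lam →
      ‖xlam lam - xstar‖ ^ 2 ≤ α * lam * L ^ 2 / (2 * μ) := by
    intro lam hlam
    -- strong convexity of F := f + α g
    have hscF : ∀ y z : EuclideanSpace ℝ (Fin d), ∀ t : ℝ, 0 ≤ t → t ≤ 1 →
        (fun x => f x + α * g x) (t • y + (1 - t) • z) ≤
          t * (fun x => f x + α * g x) y + (1 - t) * (fun x => f x + α * g x) z -
            μ / 2 * (t * (1 - t) * ‖y - z‖ ^ 2) := by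
      intro y z t ht0 ht1
      have h1 := hf y z t ht0 ht1
      have h2 : g (t • y + (1 - t) • z) ≤ t * g y + (1 - t) * g z :=
        hg.2 (Set.mem_univ y) (Set.mem_univ z) ht0 (by linarith) (by ring)
      have h3 : α * g (t • y + (1 - t) • z) ≤ α * (t * g y + (1 - t) * g z) :=
        mul_le_mul_of_nonneg_left h2 hα.le
      simp only
      nlinarith
    have hscFl : ∀ y z : EuclideanSpace ℝ (Fin d), ∀ t : ℝ, 0 ≤ t → t ≤ 1 →
        (fun x => f x + α * moreauEnv g lam x) (t • y + (1 - t) • z) ≤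
          t * (fun x => f x + α * moreauEnv g lam x) y +
            (1 - t) * (fun x => f x + α * moreauEnv g lam x) z -
            μ / 2 * (t * (1 - t) * ‖y - z‖ ^ 2) := by
      intro y z t ht0 ht1
      have h1 := hf y z t ht0 ht1
      have h2 := moreau_convex_ineq hg hgL hlam y z ht0 ht1
      have h3 : α * moreauEnv g lam (t • y + (1 - t) • z) ≤
          α * (t * moreauEnv g lam y + (1 - t) * moreauEnv g lam z) :=
        mul_le_mul_of_nonneg_left h2 hα.le
      simp only
      nlinarith
    have hminF : ∀ y, (fun x => f x + α * g x) xstar ≤ (fun x => f x + α * g x) y :=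
      fun y => hxstar y
    have hminFl : ∀ y, (fun x => f x + α * moreauEnv g lam x) (xlam lam) ≤
        (fun x => f x + α * moreauEnv g lam x) y := fun y => hxlam lam hlam y
    have hq1 := strong_min_quad (F := fun x => f x + α * g x) hμ hscF hminF (xlam lam)
    have hq2 := strong_min_quad (F := fun x => f x + α * moreauEnv g lam x) hμ hscFl hminFl xstar
    have h3 : α * g (xlam lam) ≤ α * moreauEnv g lam (xlam lam) + α * (lam * L ^ 2 / 2) := by
      have := moreau_ge hgL hlam (xlam lam)
      nlinarith
    have h4 : α * moreauEnv g lam xstar ≤ α * g xstar :=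
      mul_le_mul_of_nonneg_left (moreau_le hgL hlam xstar) hα.le
    have hrev : ‖xstar - xlam lam‖ = ‖xlam lam - xstar‖ := norm_sub_rev _ _
    rw [hrev] at hq2
    have hmain : μ * ‖xlam lam - xstar‖ ^ 2 ≤ α * (lam * L ^ 2 / 2) := by
      nlinarith [hq1, hq2, h3, h4]
    rw [le_div_iff₀ (by positivity : (0:ℝ) < 2 * μ)]
    nlinarith
  refine ⟨hbound, ?_⟩
  set C : ℝ := α * L ^ 2 / (2 * μ) with hC
  have hC0 : 0 ≤ C := by positivity
  rw [tendsto_iff_dist_tendsto_zero]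
  apply squeeze_zero' (Filter.Eventually.of_forall fun _ => dist_nonneg)
  · show ∀ᶠ lam in nhdsWithin 0 (Set.Ioi 0),
      dist (xlam lam) xstar ≤ Real.sqrt (C * lam)
    filter_upwards [self_mem_nhdsWithin] with lam hlam
    have hlam' : (0:ℝ) < lam := hlam
    have hb := hbound lam hlam'
    have hb' : ‖xlam lam - xstar‖ ^ 2 ≤ C * lam := by
      rw [hC]
      calc ‖xlam lam - xstar‖ ^ 2 ≤ α * lam * L ^ 2 / (2 * μ) := hb
        _ = α * L ^ 2 / (2 * μ) * lam := by ring
    rw [dist_eq_norm]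
    calc ‖xlam lam - xstar‖ = Real.sqrt (‖xlam lam - xstar‖ ^ 2) :=
          (Real.sqrt_sq (norm_nonneg _)).symm
      _ ≤ Real.sqrt (C * lam) := Real.sqrt_le_sqrt hb'
  · have hcont : Filter.Tendsto (fun lam : ℝ => Real.sqrt (C * lam)) (nhds 0)
        (nhds (Real.sqrt (C * 0))) :=
      (Real.continuous_sqrt.comp (continuous_const.mul continuous_id)).tendsto 0
    simpa using hcont.mono_left nhdsWithin_le_nhds
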